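/- For any configuration f on a connected loopless multigraph G, exactly one of the following holds: (1) f is L_G-effective, or (2) there exists an acyclic orientation G-> of G such that f_{G->} - f is L_G-effective. -/

import Mathlib

/-- Laplacian configuration `Δ^(i)` of the multigraph given by edge-multiplicity matrix `e`. -/
def lapG {n : ℕ} (e : Fin n → Fin n → ℕ) (i : Fin n) : Fin n → ℤ :=
  fun j => if j = i then (∑ k, (e i k : ℤ)) else -(e i j : ℤ)

/-- Toppling equivalence: `f - g` lies in the lattice generated by the `Δ^(i)`. -/
def topG {n : ℕ} (e : Fin n → Fin n → ℕ) (f g : Fin n → ℤ) : Prop :=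
  ∃ a : Fin n → ℤ, f - g = ∑ i, a i • lapG e i

/-- `L_G`-effectiveness: toppling equivalent to a nonnegative configuration. -/
def effG {n : ℕ} (e : Fin n → Fin n → ℕ) (f : Fin n → ℤ) : Prop :=
  ∃ g : Fin n → ℤ, topG e f g ∧ ∀ i, 0 ≤ g i

/-- The Baker–Norine rank:
`rankG e f + 1 = min {deg λ | λ ≥ 0, f - λ not L_G-effective}`. -/
noncomputable def rankG {n : ℕ} (e : Fin n → Fin n → ℕ) (f : Fin n → ℤ) : ℤ :=
  sInf {d : ℤ | ∃ lam : Fin n → ℤ,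
    (∀ i, 0 ≤ lam i) ∧ (∑ i, lam i) = d ∧ ¬ effG e (f - lam)} - 1

def lattG {n : ℕ} (e : Fin n → Fin n → ℕ) (z : Fin n → ℤ) : Prop :=
  ∃ a : Fin n → ℤ, z = ∑ i, a i • lapG e i

lemma latt_apply {n : ℕ} (e : Fin n → Fin n → ℕ)
    (hsym : ∀ i j, e i j = e j i) (hloop : ∀ i, e i i = 0)
    (a : Fin n → ℤ) (j : Fin n) :
    (∑ i, a i • lapG e i) j = ∑ k, (a j - a k) * (e j k : ℤ) := by
  have h1 : (∑ i, a i • lapG e i) j = ∑ i, a i * lapG e i j := by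
    simp [Finset.sum_apply]
  rw [h1]
  have h2 : ∀ i : Fin n, a i * lapG e i j
      = (if i = j then a j * (∑ k, (e j k : ℤ)) + a i * (e j i : ℤ) else 0)
        - a i * (e j i : ℤ) := by
    intro i
    by_cases h : i = j
    · subst h; simp [lapG]
    · have : lapG e i j = -(e i j : ℤ) := by simp [lapG, Ne.symm h]
      rw [this, if_neg h, hsym j i]; ring
  rw [Finset.sum_congr rfl (fun i _ => h2 i), Finset.sum_sub_distrib,
    Finset.sum_ite_eq' Finset.univ j]
  simp only [Finset.mem_univ, if_true, hloop j, Nat.cast_zero, mul_zero, add_zero]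
  rw [Finset.sum_congr rfl (fun k _ => sub_mul (a j) (a k) ((e j k : ℤ))),
    Finset.sum_sub_distrib, Finset.mul_sum]

lemma latt_deg {n : ℕ} (e : Fin n → Fin n → ℕ)
    (hsym : ∀ i j, e i j = e j i) (hloop : ∀ i, e i i = 0)
    (a : Fin n → ℤ) :
    ∑ j, (∑ i, a i • lapG e i) j = 0 := by
  rw [Finset.sum_congr rfl (fun j _ => latt_apply e hsym hloop a j)]
  have : ∀ j k : Fin n, (a j - a k) * (e j k : ℤ)
      = a j * e j k - a k * e j k := fun j k => sub_mul _ _ _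
  simp only [this, Finset.sum_sub_distrib]
  rw [sub_eq_zero]
  rw [Finset.sum_comm]
  apply Finset.sum_congr rfl; intro k _
  apply Finset.sum_congr rfl; intro j _
  rw [hsym j k]

lemma latt_zero {n : ℕ} (e : Fin n → Fin n → ℕ) : lattG e 0 :=
  ⟨0, by simp⟩

lemma latt_add {n : ℕ} (e : Fin n → Fin n → ℕ) {y z : Fin n → ℤ}
    (hy : lattG e y) (hz : lattG e z) : lattG e (y + z) := by
  obtain ⟨a, ha⟩ := hy; obtain ⟨b, hb⟩ := hz
  exact ⟨a + b, by simp [ha, hb, add_smul, Finset.sum_add_distrib]⟩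

lemma latt_neg {n : ℕ} (e : Fin n → Fin n → ℕ) {z : Fin n → ℤ}
    (hz : lattG e z) : lattG e (-z) := by
  obtain ⟨a, ha⟩ := hz
  exact ⟨-a, by simp [ha, neg_smul, Finset.sum_neg_distrib]⟩

lemma latt_sub {n : ℕ} (e : Fin n → Fin n → ℕ) {y z : Fin n → ℤ}
    (hy : lattG e y) (hz : lattG e z) : lattG e (y - z) := by
  rw [sub_eq_add_neg]; exact latt_add e hy (latt_neg e hz)

lemma latt_sum {n : ℕ} (e : Fin n → Fin n → ℕ) {ι : Type*} (s : Finset ι)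
    (F : ι → (Fin n → ℤ)) (h : ∀ i ∈ s, lattG e (F i)) :
    lattG e (∑ i ∈ s, F i) := by
  classical
  induction s using Finset.induction with
  | empty => simpa using latt_zero e
  | insert x s' hx ih =>
    rw [Finset.sum_insert hx]
    exact latt_add e (h x (Finset.mem_insert_self x s'))
      (ih (fun i hi => h i (Finset.mem_insert_of_mem hi)))


section
variable {n : ℕ}

lemma exists_source (ε : Fin n → Fin n → ℕ)
    (hac : ∀ i : Fin n, ¬ Relation.TransGen (fun a b => 0 < ε a b) i i)
    (S : Finset (Fin n)) (hS : S.Nonempty) :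
    ∃ v ∈ S, ∀ w ∈ S, ε w v = 0 := by
  classical
  by_contra hcon
  push_neg at hcon
  have hpred : ∀ v ∈ S, ∃ w ∈ S, 0 < ε w v := by
    intro v hv
    obtain ⟨w, hw, hne⟩ := hcon v hv
    exact ⟨w, hw, Nat.pos_of_ne_zero hne⟩
  obtain ⟨v0, hv0⟩ := hS
  choose F hFmem hFpos using hpred
  let y : ℕ → {v : Fin n // v ∈ S} := fun k =>
    Nat.rec (motive := fun _ => {v : Fin n // v ∈ S}) ⟨v0, hv0⟩
      (fun _ p => ⟨F p.1 p.2, hFmem p.1 p.2⟩) k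
  let x : ℕ → Fin n := fun k => (y k).1
  have hstep : ∀ k, 0 < ε (x (k+1)) (x k) := fun k => hFpos (y k).1 (y k).2
  have htrans : ∀ k m, k < m → Relation.TransGen (fun a b => 0 < ε a b) (x m) (x k) := by
    intro k m
    induction m with
    | zero => omega
    | succ m ih =>
      intro hkm
      rcases Nat.lt_succ_iff_lt_or_eq.mp hkm with h | h
      · exact Relation.TransGen.head (hstep m) (ih h)
      · subst h; exact Relation.TransGen.single (hstep _)
  obtain ⟨k, m, hne, heq⟩ := Finite.exists_ne_map_eq_of_infinite x
  rcases hne.lt_or_gt with h | h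
  · exact hac (x k) (heq ▸ htrans k m h)
  · exact hac (x m) (heq ▸ htrans m k h)

end


lemma not_eff_nu {n : ℕ} (hn : 0 < n) (e : Fin n → Fin n → ℕ)
    (hsym : ∀ i j, e i j = e j i) (hloop : ∀ i, e i i = 0)
    (ε : Fin n → Fin n → ℕ) (hεe : ∀ i j, ε i j + ε j i = e i j)
    (hac : ∀ i : Fin n, ¬ Relation.TransGen (fun a b => 0 < ε a b) i i)
    (E c : Fin n → ℤ) (hE : ∀ i, 0 ≤ E i)
    (heq : (fun i => (∑ j, (ε j i : ℤ)) - 1) - E = ∑ i, c i • lapG e i) :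
    False := by
  classical
  have i0 : Fin n := ⟨0, hn⟩
  obtain ⟨b, -, hb⟩ := Finset.exists_max_image Finset.univ c ⟨i0, Finset.mem_univ i0⟩
  set M := c b with hM
  set S : Finset (Fin n) := Finset.univ.filter (fun i => c i = M) with hS
  have hSne : S.Nonempty := ⟨b, by simp [hS, hM]⟩
  obtain ⟨v, hvS, hvsrc⟩ := exists_source ε hac S hSne
  have hcv : c v = M := by simpa [hS] using hvS
  have hkey : (∑ j, (ε j v : ℤ)) ≤ ∑ k, (c v - c k) * (e v k : ℤ) := by
    apply Finset.sum_le_sum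
    intro j _
    by_cases hj : j ∈ S
    · have : ε j v = 0 := hvsrc j hj
      have hcj : c j = M := by simpa [hS] using hj
      simp [this, hcv, hcj]
    · have hcj : c j ≠ M := by simpa [hS] using hj
      have h1 : c j + 1 ≤ M := by
        have := hb j (Finset.mem_univ j)
        omega
      have h2 : (ε j v : ℤ) ≤ (e v j : ℤ) := by
        have h3 := hεe j v
        rw [hsym v j]
        exact_mod_cast (by omega : ε j v ≤ e j v)
      calc (ε j v : ℤ) ≤ (e v j : ℤ) := h2
        _ ≤ (c v - c j) * (e v j : ℤ) := by
            apply le_mul_of_one_le_left (by positivity)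
            omega
  have hv := congr_fun heq v
  rw [latt_apply e hsym hloop c v] at hv
  simp only [Pi.sub_apply] at hv
  have := hE v
  linarith


section
variable {n : ℕ}
attribute [local instance] Classical.propDecidable

def reachE (e : Fin n → Fin n → ℕ) (q : Fin n) : ℕ → Fin n → Prop
  | 0, v => v = q
  | (k+1), v => ∃ w, reachE e q k w ∧ 0 < e w v

lemma reach_exists (e : Fin n → Fin n → ℕ) (q : Fin n)
    (hconn : ∀ i j : Fin n, Relation.ReflTransGen (fun a b => 0 < e a b) i j)
    (v : Fin n) : ∃ k, reachE e q k v := by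
  induction hconn q v with
  | refl => exact ⟨0, rfl⟩
  | tail h1 h2 ih =>
    obtain ⟨k, hk⟩ := ih
    exact ⟨k + 1, _, hk, h2⟩

variable (e : Fin n → Fin n → ℕ) (q : Fin n)
  (hconn : ∀ i j : Fin n, Relation.ReflTransGen (fun a b => 0 < e a b) i j)

noncomputable def dE (e : Fin n → Fin n → ℕ) (q : Fin n)
    (hconn : ∀ i j : Fin n, Relation.ReflTransGen (fun a b => 0 < e a b) i j)
    (v : Fin n) : ℕ := Nat.find (reach_exists e q hconn v)

lemma dE_spec (v : Fin n) : reachE e q (dE e q hconn v) v :=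
  Nat.find_spec (reach_exists e q hconn v)

lemma dE_le {k : ℕ} {v : Fin n} (h : reachE e q k v) : dE e q hconn v ≤ k :=
  Nat.find_le h

lemma dE_q : dE e q hconn q = 0 :=
  Nat.le_zero.mp (dE_le e q hconn (show reachE e q 0 q from rfl))

lemma dE_eq_zero {v : Fin n} (h : dE e q hconn v = 0) : v = q := by
  have := dE_spec e q hconn v
  rw [h] at this
  exact this

lemma dE_pred {v : Fin n} (hv : v ≠ q) :
    ∃ w, 0 < e w v ∧ dE e q hconn w + 1 ≤ dE e q hconn v := by
  have hpos : dE e q hconn v ≠ 0 := fun h => hv (dE_eq_zero e q hconn h)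
  obtain ⟨m, hm⟩ := Nat.exists_eq_succ_of_ne_zero hpos
  have := dE_spec e q hconn v
  rw [hm] at this
  obtain ⟨w, hw, hew⟩ := this
  exact ⟨w, hew, by have := dE_le e q hconn hw; omega⟩

lemma dE_adj {u x : Fin n} (h : 0 < e u x) :
    dE e q hconn x ≤ dE e q hconn u + 1 :=
  dE_le e q hconn ⟨u, dE_spec e q hconn u, h⟩

-- nonemptiness of effective-off-q representatives
include hconn in
lemma nonempty_offq (hsym : ∀ i j, e i j = e j i) (hloop : ∀ i, e i i = 0)
    (f : Fin n → ℤ) :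
    ∃ g : Fin n → ℤ, lattG e (f - g) ∧ ∀ i, i ≠ q → 0 ≤ g i := by
  classical
  have P : ∀ w : Fin n, ∀ C : ℤ, ∃ z : Fin n → ℤ,
      lattG e z ∧ (∀ i, i ≠ q → 0 ≤ z i) ∧ (w ≠ q → C ≤ z w) := by
    intro w
    induction hconn q w with
    | refl => exact fun C => ⟨0, latt_zero e, by simp, fun h => absurd rfl h⟩
    | @tail b c h1 h2 ih =>
      intro C
      by_cases hc : c = q
      · exact ⟨0, latt_zero e, by simp, fun h => absurd hc h⟩
      have hbc : b ≠ c := by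
        intro h; rw [h, hloop] at h2; exact lt_irrefl 0 h2
      set t : ℤ := max C 1 with ht
      have ht1 : 1 ≤ t := le_max_right _ _
      have htC : C ≤ t := le_max_left _ _
      -- z1 : single negative fire at b with multiplicity t
      set a1 : Fin n → ℤ := fun i => if i = b then -t else 0 with ha1
      set z1 : Fin n → ℤ := ∑ i, a1 i • lapG e i with hz1
      have hz1mem : lattG e z1 := ⟨a1, rfl⟩
      have hz1b : z1 b = -t * ∑ k, (e b k : ℤ) := by
        rw [hz1, latt_apply e hsym hloop a1 b]
        rw [Finset.mul_sum]
        apply Finset.sum_congr rfl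
        intro k _
        by_cases hk : k = b
        · subst hk; simp [ha1, hloop]
        · simp [ha1, hk]
      have hz1o : ∀ j, j ≠ b → z1 j = t * (e j b : ℤ) := by
        intro j hj
        rw [hz1, latt_apply e hsym hloop a1 j]
        rw [show t * (e j b : ℤ) = ∑ k, (if k = b then t * (e j b : ℤ) else 0) by
          simp]
        apply Finset.sum_congr rfl
        intro k _
        by_cases hk : k = b
        · subst hk; simp [ha1, hj]
        · simp [ha1, hk, hj]
      have hz1c : t ≤ z1 c := by
        rw [hz1o c hbc.symm]
        have : (1 : ℤ) ≤ (e c b : ℤ) := by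
          rw [hsym c b] at *
          exact_mod_cast h2
        nlinarith
      by_cases hbq : b = q
      · subst hbq
        refine ⟨z1, hz1mem, ?_, fun _ => le_trans htC hz1c⟩
        intro i hi
        rw [hz1o i hi]
        positivity
      · obtain ⟨y, hy, hyo, hyb⟩ := ih (t * ∑ k, (e b k : ℤ))
        refine ⟨y + z1, latt_add e hy hz1mem, ?_, fun _ => ?_⟩
        · intro i hi
          by_cases hib : i = b
          · subst hib
            have := hyb hbq
            simp only [Pi.add_apply]
            rw [hz1b]
            linarith
          · have := hyo i hi
            simp only [Pi.add_apply]
            rw [hz1o i hib]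
            positivity
        · have hyc : 0 ≤ y c := hyo c hc
          simp only [Pi.add_apply]
          linarith [hz1c]
  -- combine
  choose Z hZlatt hZoff hZself using fun j => P j (-f j)
  refine ⟨f + ∑ j, Z j, ?_, ?_⟩
  · have : f - (f + ∑ j, Z j) = -(∑ j, Z j) := by ring
    rw [this]
    exact latt_neg e (latt_sum e Finset.univ Z (fun j _ => hZlatt j))
  · intro i hi
    have hsum : ∑ j, Z j i = Z i i + ∑ j ∈ Finset.univ.erase i, Z j i :=
      (Finset.add_sum_erase _ (fun j => Z j i) (Finset.mem_univ i)).symm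
    simp only [Pi.add_apply, Finset.sum_apply]
    rw [hsum]
    have h1 : -f i ≤ Z i i := hZself i hi
    have h2 : 0 ≤ ∑ j ∈ Finset.univ.erase i, Z j i :=
      Finset.sum_nonneg (fun j _ => hZoff j i hi)
    linarith

end


section
variable {n : ℕ}

lemma exists_reduced (e : Fin n → Fin n → ℕ) (q : Fin n)
    (hconn : ∀ i j : Fin n, Relation.ReflTransGen (fun a b => 0 < e a b) i j)
    (hsym : ∀ i j, e i j = e j i) (hloop : ∀ i, e i i = 0)
    (f : Fin n → ℤ) :
    ∃ g : Fin n → ℤ, lattG e (f - g) ∧ (∀ i, i ≠ q → 0 ≤ g i) ∧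
      ∀ S : Finset (Fin n), S.Nonempty → q ∉ S →
        ∃ v ∈ S, g v < ∑ k ∈ Finset.univ \ S, (e v k : ℤ) := by
  classical
  set d : Fin n → ℕ := dE e q hconn with hd
  set D : ℕ := Finset.univ.sup d with hD
  have hdD : ∀ v, d v ≤ D := fun v => Finset.le_sup (Finset.mem_univ v)
  set Etot : ℕ := ∑ i, ∑ j, e i j with hEtot
  set c : ℤ := (Etot : ℤ) + 2 with hc
  have hc1 : (1 : ℤ) ≤ c := by rw [hc]; omega
  set w : Fin n → ℤ := fun v => c ^ (D - d v) with hw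
  have hw1 : ∀ v, 1 ≤ w v := fun v => one_le_pow₀ hc1
  have hwD : ∀ v, w v ≤ c ^ D := fun v => pow_le_pow_right₀ hc1 (Nat.sub_le _ _)
  -- the class of representatives nonneg off q
  set A : (Fin n → ℤ) → Prop :=
    fun g => lattG e (f - g) ∧ ∀ i, i ≠ q → 0 ≤ g i with hA
  have hdeg : ∀ g, A g → ∑ i, g i = ∑ i, f i := by
    intro g hg
    obtain ⟨a, ha⟩ := hg.1
    have := latt_deg e hsym hloop a
    rw [← ha] at this
    simp only [Pi.sub_apply, Finset.sum_sub_distrib] at this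
    linarith
  have hbd : ∀ g, A g → g q ≤ ∑ i, f i := by
    intro g hg
    have h1 := hdeg g hg
    have h2 : ∑ i, g i = g q + ∑ i ∈ Finset.univ.erase q, g i :=
      (Finset.add_sum_erase _ g (Finset.mem_univ q)).symm
    have h3 : 0 ≤ ∑ i ∈ Finset.univ.erase q, g i :=
      Finset.sum_nonneg (fun i hi => hg.2 i (Finset.ne_of_mem_erase hi))
    linarith
  obtain ⟨g0, hg0l, hg0o⟩ := nonempty_offq e q hconn hsym hloop f
  -- maximize g q
  obtain ⟨M, ⟨g1, hg1A, hg1q⟩, hMmax⟩ :=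
    Int.exists_greatest_of_bdd (P := fun m => ∃ g, A g ∧ g q = m)
      ⟨∑ i, f i, fun m ⟨g, hg, hq⟩ => hq ▸ hbd g hg⟩ ⟨g0 q, g0, ⟨hg0l, hg0o⟩, rfl⟩
  -- maximize Φ among those with g q = M
  set Φ : (Fin n → ℤ) → ℤ := fun g => ∑ i ∈ Finset.univ.erase q, g i * w i with hΦ
  have hΦbd : ∀ g, A g → g q = M → Φ g ≤ (∑ i, f i - M) * c ^ D := by
    intro g hg hq
    have h1 : Φ g ≤ ∑ i ∈ Finset.univ.erase q, g i * c ^ D := by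
      apply Finset.sum_le_sum
      intro i hi
      exact mul_le_mul_of_nonneg_left (hwD i) (hg.2 i (Finset.ne_of_mem_erase hi))
    rw [← Finset.sum_mul] at h1
    have h2 : ∑ i ∈ Finset.univ.erase q, g i = ∑ i, f i - M := by
      have := (Finset.add_sum_erase _ g (Finset.mem_univ q)).symm
      have hdg := hdeg g hg
      rw [hq] at this
      linarith
    rw [h2] at h1
    exact h1
  obtain ⟨P0, ⟨g, hgA, hgq, hgΦ⟩, hPmax⟩ :=
    Int.exists_greatest_of_bdd (P := fun p => ∃ g, A g ∧ g q = M ∧ Φ g = p)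
      ⟨(∑ i, f i - M) * c ^ D, fun p ⟨g, hg, hq, hp⟩ => hp ▸ hΦbd g hg hq⟩
      ⟨Φ g1, g1, hg1A, hg1q, rfl⟩
  refine ⟨g, hgA.1, hgA.2, ?_⟩
  intro S hSne hqS
  by_contra hcon
  push_neg at hcon
  -- fire the set S
  set a : Fin n → ℤ := fun i => if i ∈ S then -1 else 0 with ha
  set z : Fin n → ℤ := ∑ i, a i • lapG e i with hz
  have hfil1 : Finset.univ.filter (fun k => k ∈ S) = S := by ext x; simp
  have hfil2 : Finset.univ.filter (fun k => ¬ k ∈ S) = Finset.univ \ S := by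
    ext x; simp
  have hz_in : ∀ v ∈ S, z v = -∑ k ∈ Finset.univ \ S, (e v k : ℤ) := by
    intro v hv
    rw [hz, latt_apply e hsym hloop a v]
    rw [← Finset.sum_filter_add_sum_filter_not Finset.univ (fun k => k ∈ S)]
    rw [hfil1, hfil2]
    have e1 : ∑ k ∈ S, (a v - a k) * (e v k : ℤ) = 0 := by
      apply Finset.sum_eq_zero
      intro k hk
      simp [ha, hv, hk]
    rw [e1, zero_add, ← Finset.sum_neg_distrib]
    apply Finset.sum_congr rfl
    intro k hk
    have : k ∉ S := (Finset.mem_sdiff.mp hk).2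
    simp [ha, hv, this]
  have hz_out : ∀ v, v ∉ S → z v = ∑ k ∈ S, (e v k : ℤ) := by
    intro v hv
    rw [hz, latt_apply e hsym hloop a v]
    rw [← Finset.sum_filter_add_sum_filter_not Finset.univ (fun k => k ∈ S)]
    rw [hfil1, hfil2]
    have e2 : ∑ k ∈ Finset.univ \ S, (a v - a k) * (e v k : ℤ) = 0 := by
      apply Finset.sum_eq_zero
      intro k hk
      have : k ∉ S := (Finset.mem_sdiff.mp hk).2
      simp [ha, hv, this]
    rw [e2, add_zero]
    apply Finset.sum_congr rfl
    intro k hk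
    simp [ha, hv, hk]
  set g' : Fin n → ℤ := g + z with hg'
  have hg'A : A g' := by
    constructor
    · have : f - g' = (f - g) - z := by rw [hg']; ring
      rw [this]
      exact latt_sub e hgA.1 ⟨a, hz⟩
    · intro i hi
      by_cases hiS : i ∈ S
      · have := hcon i hiS
        simp only [hg', Pi.add_apply]
        rw [hz_in i hiS]
        linarith
      · have h0 : (0:ℤ) ≤ ∑ k ∈ S, (e i k : ℤ) := by positivity
        have := hgA.2 i hi
        simp only [hg', Pi.add_apply]
        rw [hz_out i hiS]
        linarith
  have hzq : z q = ∑ k ∈ S, (e q k : ℤ) := hz_out q hqS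
  have hg'q : g' q = M + ∑ k ∈ S, (e q k : ℤ) := by
    simp only [hg', Pi.add_apply, hzq, hgq]
  have hSq0 : ∑ k ∈ S, (e q k : ℤ) = 0 := by
    have h1 : g' q ≤ M := hMmax (g' q) ⟨g', hg'A, rfl⟩
    have h2 : (0:ℤ) ≤ ∑ k ∈ S, (e q k : ℤ) := by positivity
    omega
  have hzq0 : z q = 0 := by rw [hzq, hSq0]
  -- Φ increases
  have hΔ : Φ g' - Φ g = ∑ i, z i * w i := by
    have h1 : Φ g' = Φ g + ∑ i ∈ Finset.univ.erase q, z i * w i := by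
      simp only [hΦ, hg', Pi.add_apply, add_mul, Finset.sum_add_distrib]
    have h2 : ∑ i ∈ Finset.univ.erase q, z i * w i = ∑ i, z i * w i := by
      rw [Finset.sum_erase_eq_sub (Finset.mem_univ q), hzq0, zero_mul, sub_zero]
    rw [h1, h2]; ring
  have hsplit : ∑ i, z i * w i
      = ∑ p ∈ S ×ˢ (Finset.univ \ S), (e p.1 p.2 : ℤ) * (w p.2 - w p.1) := by
    have h3 : ∑ i, z i * w i
        = ∑ i ∈ Finset.univ \ S, z i * w i + ∑ i ∈ S, z i * w i :=
      (Finset.sum_sdiff (Finset.subset_univ S)).symm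
    rw [h3]
    have h4 : ∑ i ∈ S, z i * w i
        = -∑ u ∈ S, ∑ x ∈ Finset.univ \ S, (e u x : ℤ) * w u := by
      rw [← Finset.sum_neg_distrib]
      apply Finset.sum_congr rfl
      intro u hu
      rw [hz_in u hu, ← Finset.sum_neg_distrib, Finset.sum_mul, ← Finset.sum_neg_distrib]
      apply Finset.sum_congr rfl
      intro x _
      ring
    have h5 : ∑ i ∈ Finset.univ \ S, z i * w i
        = ∑ u ∈ S, ∑ x ∈ Finset.univ \ S, (e u x : ℤ) * w x := by
      rw [Finset.sum_comm]
      apply Finset.sum_congr rfl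
      intro x hx
      rw [hz_out x (Finset.mem_sdiff.mp hx).2, Finset.sum_mul]
      apply Finset.sum_congr rfl
      intro u _
      rw [hsym x u]
    rw [h4, h5, Finset.sum_product, ← sub_eq_add_neg]
    rw [← Finset.sum_sub_distrib]
    apply Finset.sum_congr rfl
    intro u _
    rw [← Finset.sum_sub_distrib]
    apply Finset.sum_congr rfl
    intro x _
    ring
  -- pick minimal-distance u* in S
  obtain ⟨u, huS, humin⟩ := Finset.exists_min_image S d hSne
  have huq : u ≠ q := fun h => hqS (h ▸ huS)
  have hd1 : 1 ≤ d u := by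
    rcases Nat.eq_zero_or_pos (d u) with h | h
    · exact absurd (dE_eq_zero e q hconn h) huq
    · exact h
  obtain ⟨v, hev, hdv'⟩ := dE_pred e q hconn huq
  have hdv : d v + 1 ≤ d u := hdv'
  have hvS : v ∉ S := by
    intro hv
    have := humin v hv
    omega
  have hp : (u, v) ∈ S ×ˢ (Finset.univ \ S) := by
    rw [Finset.mem_product]
    exact ⟨huS, Finset.mem_sdiff.mpr ⟨Finset.mem_univ v, hvS⟩⟩
  set P : ℤ := c ^ (D - d u) with hP
  have hPpos : 0 < P := by positivity
  have hterm : (c - 1) * P ≤ (e u v : ℤ) * (w v - w u) := by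
    have h1 : (1:ℤ) ≤ (e u v : ℤ) := by
      rw [hsym u v]; exact_mod_cast hev
    have h2 : c * P ≤ w v := by
      have hDd : D - d u + 1 ≤ D - d v := by
        have := hdD u
        omega
      calc c * P = c ^ (D - d u + 1) := by rw [hP, pow_succ]; ring
        _ ≤ c ^ (D - d v) := pow_le_pow_right₀ hc1 hDd
        _ = w v := rfl
    have h3 : w u = P := rfl
    have h4 : 0 ≤ w v - w u := by
      have := hw1 v; have := hw1 u
      nlinarith [hwD u, h2, hPpos]
    calc (c - 1) * P = c * P - P := by ring
      _ ≤ w v - w u := by rw [h3]; linarith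
      _ ≤ (e u v : ℤ) * (w v - w u) := le_mul_of_one_le_left h4 h1
  have hother : ∀ p ∈ (S ×ˢ (Finset.univ \ S)).erase (u, v),
      -((e p.1 p.2 : ℤ) * P) ≤ (e p.1 p.2 : ℤ) * (w p.2 - w p.1) := by
    intro p hp'
    have hp1 : p.1 ∈ S := (Finset.mem_product.mp (Finset.mem_of_mem_erase hp')).1
    have hwp1 : w p.1 ≤ P := by
      rw [hP, hw]
      apply pow_le_pow_right₀ hc1
      have := humin p.1 hp1
      omega
    have h5 : -P ≤ w p.2 - w p.1 := by
      have := hw1 p.2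
      linarith
    calc -((e p.1 p.2 : ℤ) * P) = (e p.1 p.2 : ℤ) * (-P) := by ring
      _ ≤ (e p.1 p.2 : ℤ) * (w p.2 - w p.1) :=
        mul_le_mul_of_nonneg_left h5 (by positivity)
  have hEbound : ∑ p ∈ (S ×ˢ (Finset.univ \ S)).erase (u, v), (e p.1 p.2 : ℤ)
      ≤ (Etot : ℤ) := by
    calc ∑ p ∈ (S ×ˢ (Finset.univ \ S)).erase (u, v), (e p.1 p.2 : ℤ)
        ≤ ∑ p ∈ Finset.univ ×ˢ Finset.univ, (e p.1 p.2 : ℤ) := by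
          apply Finset.sum_le_sum_of_subset_of_nonneg
          · intro p hp''
            exact Finset.mem_product.mpr ⟨Finset.mem_univ _, Finset.mem_univ _⟩
          · intro p _ _; positivity
      _ = (Etot : ℤ) := by
          rw [Finset.sum_product, hEtot]
          push_cast
          rfl
  have hsum_lb : P ≤ ∑ p ∈ S ×ˢ (Finset.univ \ S), (e p.1 p.2 : ℤ) * (w p.2 - w p.1) := by
    rw [← Finset.add_sum_erase _ _ hp]
    have h6 : -((Etot : ℤ) * P) ≤ ∑ p ∈ (S ×ˢ (Finset.univ \ S)).erase (u, v),
        (e p.1 p.2 : ℤ) * (w p.2 - w p.1) := by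
      calc -((Etot : ℤ) * P)
          ≤ -(( ∑ p ∈ (S ×ˢ (Finset.univ \ S)).erase (u, v), (e p.1 p.2 : ℤ)) * P) := by
            have := mul_le_mul_of_nonneg_right hEbound hPpos.le
            linarith
        _ = ∑ p ∈ (S ×ˢ (Finset.univ \ S)).erase (u, v), -((e p.1 p.2 : ℤ) * P) := by
            rw [Finset.sum_mul, Finset.sum_neg_distrib]
        _ ≤ _ := Finset.sum_le_sum hother
    have h7 := hterm
    have h8 : (c - 1) * P - (Etot : ℤ) * P = P := by rw [hc]; ring
    linarith
  have hfinal : Φ g < Φ g' := by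
    rw [← sub_pos, hΔ, hsplit]
    linarith
  have := hPmax (Φ g') ⟨g', hg'A, by rw [hg'q, hSq0, add_zero], rfl⟩
  linarith

end


section
variable {n : ℕ}

-- helper: membership in take prefix vs indexOf, for nodup lists
lemma mem_take_iff_indexOf {α : Type*} [DecidableEq α] (L : List α) (hnd : L.Nodup)
    (x : α) (hx : x ∈ L) (m : ℕ) :
    x ∈ (L.take m).toFinset ↔ L.idxOf x < m := by
  rw [List.mem_toFinset, List.mem_take_iff_getElem]
  constructor
  · rintro ⟨i, hi, rfl⟩
    have h1 : L.idxOf L[i] < L.length := List.idxOf_lt_length_iff.mpr (List.getElem_mem _)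
    have h2 : L[L.idxOf L[i]] = L[i] := List.getElem_idxOf h1
    have h3 : L.idxOf L[i] = i := (hnd.getElem_inj_iff (hi := h1) (hj := by omega)).mp h2
    omega
  · intro h
    have h1 : L.idxOf x < L.length := List.idxOf_lt_length_iff.mpr hx
    exact ⟨L.idxOf x, by omega, List.getElem_idxOf h1⟩

lemma dhar_list (e : Fin n → Fin n → ℕ) (q : Fin n) (g : Fin n → ℤ)
    (hred : ∀ S : Finset (Fin n), S.Nonempty → q ∉ S →
      ∃ v ∈ S, g v < ∑ k ∈ Finset.univ \ S, (e v k : ℤ)) :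
    ∀ (m : ℕ) (B : Finset (Fin n)), q ∈ B → (Finset.univ \ B).card = m →
      ∃ l : List (Fin n), l.Nodup ∧ (∀ x, x ∈ l ↔ x ∉ B) ∧
        ∀ (k : ℕ) (hk : k < l.length),
          g (l.get ⟨k, hk⟩) < ∑ x ∈ B ∪ (l.take k).toFinset, (e (l.get ⟨k, hk⟩) x : ℤ) := by
  intro m
  induction m with
  | zero =>
    intro B hqB hcard
    refine ⟨[], List.nodup_nil, ?_, ?_⟩
    · intro x
      simp only [List.not_mem_nil, false_iff, not_not]
      by_contra h
      have : x ∈ Finset.univ \ B := Finset.mem_sdiff.mpr ⟨Finset.mem_univ x, h⟩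
      rw [Finset.card_eq_zero] at hcard
      simp [hcard] at this
    · intro k hk
      simp at hk
  | succ m ih =>
    intro B hqB hcard
    have hSne : (Finset.univ \ B).Nonempty := by
      rw [← Finset.card_pos, hcard]; omega
    have hqS : q ∉ Finset.univ \ B := fun h => (Finset.mem_sdiff.mp h).2 hqB
    obtain ⟨v, hvS, hgv⟩ := hred _ hSne hqS
    have hvB : v ∉ B := (Finset.mem_sdiff.mp hvS).2
    have hcompl : Finset.univ \ (Finset.univ \ B) = B := by
      rw [Finset.sdiff_sdiff_self_left, Finset.univ_inter]
    rw [hcompl] at hgv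
    have hcard' : (Finset.univ \ insert v B).card = m := by
      have h1 : Finset.univ \ insert v B = (Finset.univ \ B).erase v := by
        ext x
        simp only [Finset.mem_sdiff, Finset.mem_univ, Finset.mem_insert,
          Finset.mem_erase, true_and]
        tauto
      rw [h1, Finset.card_erase_of_mem hvS, hcard]
      omega
    obtain ⟨l', hnd', hmem', hbound'⟩ := ih (insert v B) (Finset.mem_insert_of_mem hqB) hcard'
    have hvl' : v ∉ l' := fun h => (hmem' v).mp h (Finset.mem_insert_self v B)
    refine ⟨v :: l', List.nodup_cons.mpr ⟨hvl', hnd'⟩, ?_, ?_⟩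
    · intro x
      simp only [List.mem_cons, hmem' x, Finset.mem_insert]
      constructor
      · rintro (rfl | h)
        · exact hvB
        · exact fun hB => h (Or.inr hB)
      · intro h
        by_cases hxv : x = v
        · exact Or.inl hxv
        · exact Or.inr (fun hins => h (hins.resolve_left hxv))
    · intro k hk
      match k with
      | 0 =>
        simpa using hgv
      | (k' + 1) =>
        have hk' : k' < l'.length := by simpa using hk
        have hget : (v :: l').get ⟨k' + 1, hk⟩ = l'.get ⟨k', hk'⟩ := rfl
        have htake : ((v :: l').take (k' + 1)).toFinset
            = insert v (l'.take k').toFinset := by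
          simp [List.take_cons]
        rw [hget, htake]
        have hB' : B ∪ insert v (l'.take k').toFinset
            = insert v B ∪ (l'.take k').toFinset := by
          ext x
          simp only [Finset.mem_union, Finset.mem_insert]
          tauto
        rw [hB']
        exact hbound' k' hk'

end


section
variable {n : ℕ}

lemma part_b (hn : 1 ≤ n) (e : Fin n → Fin n → ℕ)
    (hsym : ∀ i j, e i j = e j i) (hloop : ∀ i, e i i = 0)
    (hconn : ∀ i j : Fin n, Relation.ReflTransGen (fun a b => 0 < e a b) i j)
    (f : Fin n → ℤ)
    (hnot : ¬ ∃ h : Fin n → ℤ, lattG e (f - h) ∧ ∀ i, 0 ≤ h i) :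
    ∃ ε : Fin n → Fin n → ℕ,
      (∀ i j, ε i j + ε j i = e i j) ∧
      (∀ i : Fin n, ¬ Relation.TransGen (fun a b => 0 < ε a b) i i) ∧
      ∃ h : Fin n → ℤ,
        lattG e (((fun i => (∑ j, (ε j i : ℤ)) - 1) - f) - h) ∧ ∀ i, 0 ≤ h i := by
  classical
  set q : Fin n := ⟨0, hn⟩ with hq
  obtain ⟨g, hglatt, hgoff, hgred⟩ := exists_reduced e q hconn hsym hloop f
  have hgq : g q < 0 := by
    by_contra hge
    push_neg at hge
    exact hnot ⟨g, hglatt, fun i => by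
      by_cases hiq : i = q
      · rw [hiq]; exact hge
      · exact hgoff i hiq⟩
  obtain ⟨l, hlnd, hlmem, hlbound⟩ :=
    dhar_list e q g hgred (Finset.univ \ {q}).card {q} (Finset.mem_singleton_self q) rfl
  set L : List (Fin n) := q :: l with hL
  have hql : q ∉ l := fun h => (hlmem q).mp h (Finset.mem_singleton_self q)
  have hLnd : L.Nodup := List.nodup_cons.mpr ⟨hql, hlnd⟩
  have hLmem : ∀ x, x ∈ L := by
    intro x
    by_cases hxq : x = q
    · rw [hxq]; exact List.mem_cons_self
    · exact List.mem_cons_of_mem q ((hlmem x).mpr (by simp [hxq]))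
  set idx : Fin n → ℕ := fun x => L.idxOf x with hidx
  have hidx_inj : ∀ x y, idx x = idx y → x = y := by
    intro x y hxy
    exact (List.idxOf_inj (hLmem x)).mp hxy
  set ε : Fin n → Fin n → ℕ := fun i j => if idx i < idx j then e i j else 0 with hε
  have hεsym : ∀ i j, ε i j + ε j i = e i j := by
    intro i j
    rcases lt_trichotomy (idx i) (idx j) with h | h | h
    · simp [hε, h, not_lt_of_gt h, hsym i j]
    · have : i = j := hidx_inj i j h
      subst this
      simp [hε, hloop i]
    · simp [hε, h, not_lt_of_gt h, hsym i j]
  have hεac : ∀ i : Fin n, ¬ Relation.TransGen (fun a b => 0 < ε a b) i i := by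
    intro i hi
    have hmono : ∀ a b, (0 < ε a b) → idx a < idx b := by
      intro a b hab
      by_contra h
      have h0 : ε a b = 0 := by simp [hε, h]
      omega
    have h2 : Relation.TransGen (fun a b => idx a < idx b) i i :=
      Relation.TransGen.mono hmono i i hi
    have h3 : ∀ a b : Fin n, Relation.TransGen (fun a b => idx a < idx b) a b →
        idx a < idx b := by
      intro a b h
      induction h with
      | single h => exact h
      | tail _ h ih => exact lt_trans ih h
    exact lt_irrefl _ (h3 i i h2)
  -- indegree computation
  have hindeg : ∀ i, (∑ j, (ε j i : ℤ)) = ∑ x ∈ (L.take (idx i)).toFinset, (e i x : ℤ) := by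
    intro i
    have h1 : (∑ j, (ε j i : ℤ))
        = ∑ j ∈ Finset.univ.filter (fun j => idx j < idx i), (e j i : ℤ) := by
      rw [Finset.sum_filter]
      apply Finset.sum_congr rfl
      intro j _
      by_cases h : idx j < idx i <;> simp [hε, h]
    rw [h1]
    have h2 : Finset.univ.filter (fun j => idx j < idx i) = (L.take (idx i)).toFinset := by
      ext x
      rw [Finset.mem_filter]
      rw [mem_take_iff_indexOf L hLnd x (hLmem x)]
      simp [hidx]
    rw [h2]
    apply Finset.sum_congr rfl
    intro x _
    rw [hsym x i]
  have hkey : ∀ i, g i < ∑ j, (ε j i : ℤ) := by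
    intro i
    by_cases hiq : i = q
    · subst hiq
      have : idx q = 0 := List.idxOf_cons_self
      rw [hindeg, this]
      simpa using hgq
    · have hil : i ∈ l := (hlmem i).mpr (by simp [hiq])
      set k : ℕ := l.idxOf i with hk
      have hkl : k < l.length := List.idxOf_lt_length_iff.mpr hil
      have hget : l.get ⟨k, hkl⟩ = i := List.idxOf_get hkl
      have hidxi : idx i = k + 1 := by
        rw [hidx]
        simp only [hL]
        rw [List.idxOf_cons_ne l (Ne.symm hiq)]
      have htake : (L.take (idx i)).toFinset = {q} ∪ (l.take k).toFinset := by
        rw [hidxi]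
        simp only [hL, List.take_succ_cons, List.toFinset_cons]
        ext x; simp
      rw [hindeg, htake]
      have := hlbound k hkl
      rw [hget] at this
      exact this
  refine ⟨ε, hεsym, hεac, (fun i => (∑ j, (ε j i : ℤ)) - 1) - g, ?_, ?_⟩
  · have heq : ((fun i => (∑ j, (ε j i : ℤ)) - 1) - f)
        - ((fun i => (∑ j, (ε j i : ℤ)) - 1) - g) = -(f - g) := by ring
    rw [heq]
    exact latt_neg e hglatt
  · intro i
    simp only [Pi.sub_apply]
    have := hkey i
    omega
end


theorem stmt8 (n : ℕ) (hn : 1 ≤ n) (e : Fin n → Fin n → ℕ)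
    (hsym : ∀ i j, e i j = e j i) (hloop : ∀ i, e i i = 0)
    (hconn : ∀ i j : Fin n, Relation.ReflTransGen (fun a b => 0 < e a b) i j)
    (f : Fin n → ℤ) :
    Xor' (effG e f)
      (∃ ε : Fin n → Fin n → ℕ,
        (∀ i j, ε i j + ε j i = e i j) ∧
        (∀ i : Fin n, ¬ Relation.TransGen (fun a b => 0 < ε a b) i i) ∧
        effG e ((fun i => (∑ j, (ε j i : ℤ)) - 1) - f)) := by
  classical
  by_cases hA : effG e f
  · left
    refine ⟨hA, ?_⟩
    rintro ⟨ε, hεe, hac, heff⟩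
    obtain ⟨g, ⟨a, ha⟩, hg⟩ := hA
    obtain ⟨h, ⟨b, hb⟩, hh⟩ := heff
    have heq : (fun i => (∑ j, (ε j i : ℤ)) - 1) - (g + h)
        = ∑ i, (a i + b i) • lapG e i := by
      have h1 : (fun i => (∑ j, (ε j i : ℤ)) - 1) - (g + h)
          = ((fun i => (∑ j, (ε j i : ℤ)) - 1) - f - h) + (f - g) := by ring
      rw [h1, hb, ha]
      rw [← Finset.sum_add_distrib]
      apply Finset.sum_congr rfl
      intro i _
      rw [add_smul]
      ring
    exact not_eff_nu (by omega) e hsym hloop ε hεe hac (g + h)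
      (fun i => a i + b i) (fun i => add_nonneg (hg i) (hh i)) heq
  · right
    refine ⟨?_, hA⟩
    have hnot : ¬ ∃ h : Fin n → ℤ, lattG e (f - h) ∧ ∀ i, 0 ≤ h i := by
      intro ⟨h, hl, hp⟩
      exact hA ⟨h, hl, hp⟩
    obtain ⟨ε, hεe, hac, hh, hlatt, hpos⟩ := part_b hn e hsym hloop hconn f hnot
    refine ⟨ε, hεe, hac, ?_⟩
    obtain ⟨a, ha⟩ := hlatt
    exact ⟨hh, ⟨a, ha⟩, hpos⟩
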